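/- Let {ρ_x, p(x)}_{x∈X} and {σ_y, q(y)}_{y∈Y} be two finite ensembles of density matrices on system S (with probability weights summing to 1), encoded as the classically-flagged beliefs β = Σ_x p(x) ρ_x⊗|x⟩⟨x| on S⊗R₁ and γ = Σ_y q(y) σ_y⊗|y⟩⟨y| on S⊗R₂, where {|x⟩} and {|y⟩} are standard orthonormal bases of R₁ and R₂. Then β and γ are equivalent beliefs if and only if Σ_x p(x) √ρ_x ⊗ √ρ_x = Σ_y q(y) √σ_y ⊗ √σ_y. -/

import Mathlib

open Matrix
open scoped Kronecker ComplexOrder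


open Classical in
/-- The positive semidefinite square root of a matrix (zero if not PSD). -/
noncomputable def msqrt {n : Type*} [Fintype n] [DecidableEq n] (A : Matrix n n ℂ) :
    Matrix n n ℂ :=
  if h : A.PosSemidef then
    (h.1.eigenvectorUnitary : Matrix n n ℂ) * diagonal ((↑) ∘ (√·) ∘ h.1.eigenvalues) *
      (star h.1.eigenvectorUnitary : Matrix n n ℂ) else 0

/-- `A^{-1/2}`: the (nonsingular) inverse of the PSD square root. -/
noncomputable def invsqrt {n : Type*} [Fintype n] [DecidableEq n] (A : Matrix n n ℂ) :
    Matrix n n ℂ :=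
  (msqrt A)⁻¹

/-- Partial trace over the second factor `R`. -/
noncomputable def ptraceR {S R : Type*} [Fintype R] (M : Matrix (S × R) (S × R) ℂ) : Matrix S S ℂ :=
  Matrix.of fun s s' => ∑ r, M (s, r) (s', r)

/-- A density matrix: positive semidefinite with unit trace. -/
def IsDensity {n : Type*} [Fintype n] (A : Matrix n n ℂ) : Prop :=
  A.PosSemidef ∧ A.trace = 1

/-- The Choi matrix of a linear map between matrix algebras. -/
def choi {S T : Type*} [Fintype S] [DecidableEq S]
    (E : Matrix S S ℂ →ₗ[ℂ] Matrix T T ℂ) : Matrix (S × T) (S × T) ℂ :=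
  Matrix.of fun p q => E (Matrix.single p.1 q.1 1) p.2 q.2

/-- Completely positive trace-preserving map. -/
def IsCPTP {S T : Type*} [Fintype S] [DecidableEq S] [Fintype T]
    (E : Matrix S S ℂ →ₗ[ℂ] Matrix T T ℂ) : Prop :=
  (∀ X, (E X).trace = X.trace) ∧ (choi E).PosSemidef

/-- The Hilbert-Schmidt adjoint `E†`, satisfying `Tr[E(X)† Y] = Tr[X† E†(Y)]`. -/
noncomputable def adjMap {S T : Type*} [Fintype S] [DecidableEq S] [Fintype T]
    (E : Matrix S S ℂ →ₗ[ℂ] Matrix T T ℂ) (Y : Matrix T T ℂ) : Matrix S S ℂ :=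
  Matrix.of fun i j => ((E (Matrix.single i j 1))ᴴ * Y).trace

/-- The original Petz map `R^{E,βS}(σ) = √βS E†(E(βS)^{-1/2} σ E(βS)^{-1/2}) √βS`. -/
noncomputable def petz {S T : Type*} [Fintype S] [DecidableEq S] [Fintype T] [DecidableEq T]
    (E : Matrix S S ℂ →ₗ[ℂ] Matrix T T ℂ) (βS : Matrix S S ℂ) (σ : Matrix T T ℂ) :
    Matrix S S ℂ :=
  msqrt βS * adjMap E (invsqrt (E βS) * σ * invsqrt (E βS)) * msqrt βS

/-- The prior-extended Petz map `R^{E⊗Tr,β}`. -/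
noncomputable def petzExt {S R T : Type*} [Fintype S] [DecidableEq S]
    [Fintype R] [DecidableEq R] [Fintype T] [DecidableEq T]
    (E : Matrix S S ℂ →ₗ[ℂ] Matrix T T ℂ) (β : Matrix (S × R) (S × R) ℂ)
    (σ : Matrix T T ℂ) : Matrix (S × R) (S × R) ℂ :=
  msqrt β *
    (adjMap E (invsqrt (E (ptraceR β)) * σ * invsqrt (E (ptraceR β))) ⊗ₖ (1 : Matrix R R ℂ)) *
    msqrt β

/-- The retrodiction map `R_ext^{E,β} = Tr_R ∘ R^{E⊗Tr,β}`. -/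
noncomputable def retroExt {S R T : Type*} [Fintype S] [DecidableEq S]
    [Fintype R] [DecidableEq R] [Fintype T] [DecidableEq T]
    (E : Matrix S S ℂ →ₗ[ℂ] Matrix T T ℂ) (β : Matrix (S × R) (S × R) ℂ)
    (σ : Matrix T T ℂ) : Matrix S S ℂ :=
  ptraceR (petzExt E β σ)

/-- Two beliefs are equivalent if they induce the same retrodiction map for all channels. -/
def EquivBeliefs {S R₁ R₂ : Type*} [Fintype S] [DecidableEq S]
    [Fintype R₁] [DecidableEq R₁] [Fintype R₂] [DecidableEq R₂]
    (β : Matrix (S × R₁) (S × R₁) ℂ) (γ : Matrix (S × R₂) (S × R₂) ℂ) : Prop :=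
  ∀ (T : Type) (_ : Fintype T) (_ : DecidableEq T)
    (E : Matrix S S ℂ →ₗ[ℂ] Matrix T T ℂ),
    IsCPTP E → (E (ptraceR β)).PosDef → (E (ptraceR γ)).PosDef →
    ∀ σ : Matrix T T ℂ, retroExt E β σ = retroExt E γ σ


set_option linter.unusedSectionVars false

section Aux
open scoped MatrixOrder
variable {n : Type*} [Fintype n] [DecidableEq n]

lemma msqrt_of_psd {A : Matrix n n ℂ} (h : A.PosSemidef) : msqrt A = CFC.sqrt A := by
  rw [msqrt, dif_pos h, CFC.sqrt_eq_cfc, cfc_nnreal_eq_real _ A, h.1.cfc_eq]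
  simp only [IsHermitian.cfc, Unitary.conjStarAlgAut_apply]
  congr 3
  funext i
  simp [Real.coe_sqrt, h.eigenvalues_nonneg i]

lemma msqrt_posSemidef {A : Matrix n n ℂ} (h : A.PosSemidef) : (msqrt A).PosSemidef := by
  rw [msqrt_of_psd h]; exact (CFC.sqrt_nonneg A).posSemidef

lemma msqrt_mul_self {A : Matrix n n ℂ} (h : A.PosSemidef) : msqrt A * msqrt A = A := by
  rw [msqrt_of_psd h]; exact CFC.sqrt_mul_sqrt_self A h.nonneg

lemma msqrt_herm {A : Matrix n n ℂ} (h : A.PosSemidef) : (msqrt A).IsHermitian :=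
  (msqrt_posSemidef h).isHermitian

lemma msqrt_eq {A B : Matrix n n ℂ} (hB : B.PosSemidef) (h : B * B = A) : msqrt A = B := by
  have hA : A.PosSemidef := by
    rw [← h]; nth_rewrite 1 [← hB.isHermitian.eq]
    exact Matrix.posSemidef_conjTranspose_mul_self B
  rw [msqrt_of_psd hA]
  exact CFC.sqrt_unique h hB.nonneg

lemma msqrt_one : msqrt (1 : Matrix n n ℂ) = 1 := msqrt_eq .one (one_mul 1)

lemma psd_csmul {A : Matrix n n ℂ} (h : A.PosSemidef) {c : ℝ} (hc : 0 ≤ c) :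
    ((c : ℂ) • A).PosSemidef := by
  exact h.smul (by exact_mod_cast hc)

lemma psd_sum {ι : Type*} (s : Finset ι) (f : ι → Matrix n n ℂ)
    (h : ∀ i ∈ s, (f i).PosSemidef) : (∑ i ∈ s, f i).PosSemidef := by
  classical
  induction s using Finset.induction with
  | empty => simpa using Matrix.PosSemidef.zero
  | insert _ _ hx ih =>
    rw [Finset.sum_insert hx]
    exact (h _ (Finset.mem_insert_self _ _)).add
      (ih fun i hi => h i (Finset.mem_insert_of_mem hi))

lemma kron_conjTranspose {m : Type*} (A : Matrix n n ℂ) (B : Matrix m m ℂ) :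
    (A ⊗ₖ B)ᴴ = Aᴴ ⊗ₖ Bᴴ := by
  ext ⟨a, b⟩ ⟨c, d⟩
  simp [conjTranspose_apply, kroneckerMap_apply]

lemma stdBasisMatrix_conjT {X : Type*} [Fintype X] [DecidableEq X] (x y : X) :
    (Matrix.single x y (1 : ℂ))ᴴ = Matrix.single y x (1 : ℂ) := by
  ext a b
  simp [conjTranspose_apply, Matrix.single, and_comm]

lemma psd_kron_std {X : Type*} [Fintype X] [DecidableEq X]
    {M : Matrix n n ℂ} (h : M.PosSemidef) (x : X) :
    (M ⊗ₖ Matrix.single x x (1 : ℂ)).PosSemidef := by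
  refine h.kronecker ?_
  have := Matrix.posSemidef_conjTranspose_mul_self (Matrix.single x x (1 : ℂ))
  rwa [stdBasisMatrix_conjT, Matrix.single_mul_single_same, one_mul] at this

end Aux

section Block

variable {S X : Type*} [Fintype S] [DecidableEq S] [Fintype X] [DecidableEq X]

/-- Block-diagonal matrix `∑ x, c x • (M x ⊗ |x⟩⟨x|)`. -/
noncomputable def Dg (c : X → ℂ) (M : X → Matrix S S ℂ) : Matrix (S × X) (S × X) ℂ :=
  ∑ x, c x • (M x ⊗ₖ Matrix.single x x (1 : ℂ))

lemma ptraceR_Dg (c : X → ℂ) (M : X → Matrix S S ℂ) :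
    ptraceR (Dg c M) = ∑ x, c x • M x := by
  ext s s'
  simp only [ptraceR, Dg, Matrix.of_apply, Matrix.sum_apply, Matrix.smul_apply,
    kroneckerMap_apply, Matrix.single, Matrix.of_apply, smul_eq_mul]
  rw [Finset.sum_comm]
  refine Finset.sum_congr rfl fun x _ => ?_
  simp [Finset.sum_ite_eq, and_self, mul_ite]

lemma Dg_mul (c c' : X → ℂ) (M M' : X → Matrix S S ℂ) (A : Matrix S S ℂ) :
    Dg c M * (A ⊗ₖ (1 : Matrix X X ℂ)) * Dg c' M'
      = Dg (fun x => c x * c' x) (fun x => M x * A * M' x) := by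
  unfold Dg
  rw [Finset.sum_mul]
  have step1 : ∀ x, c x • (M x ⊗ₖ Matrix.single x x (1 : ℂ)) * (A ⊗ₖ (1 : Matrix X X ℂ))
      = c x • ((M x * A) ⊗ₖ Matrix.single x x (1 : ℂ)) := by
    intro x
    rw [smul_mul_assoc, ← Matrix.mul_kronecker_mul, mul_one]
  simp only [step1]
  rw [Finset.sum_mul_sum]
  refine Finset.sum_congr rfl fun x _ => ?_
  refine (Finset.sum_eq_single x (fun y _ hyx => ?_)
      (fun hx => absurd (Finset.mem_univ x) hx)).trans ?_
  · rw [smul_mul_smul_comm, ← Matrix.mul_kronecker_mul,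
      Matrix.single_mul_single_of_ne (h := Ne.symm hyx)]
    simp
  · rw [smul_mul_smul_comm, ← Matrix.mul_kronecker_mul, Matrix.single_mul_single_same, one_mul]

end Block

section Block2
variable {S X : Type*} [Fintype S] [DecidableEq S] [Fintype X] [DecidableEq X]
variable {ρ : X → Matrix S S ℂ} {p : X → ℝ}

lemma Dg_posSemidef (hρ : ∀ x, (ρ x).PosSemidef) (hp : ∀ x, 0 ≤ p x) :
    (Dg (fun x => (p x : ℂ)) ρ).PosSemidef := by
  refine psd_sum _ _ fun x _ => ?_
  exact psd_csmul (psd_kron_std (hρ x) x) (hp x)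

lemma msqrt_Dg (hρ : ∀ x, (ρ x).PosSemidef) (hp : ∀ x, 0 ≤ p x) :
    msqrt (Dg (fun x => (p x : ℂ)) ρ)
      = Dg (fun x => (Real.sqrt (p x) : ℂ)) (fun x => msqrt (ρ x)) := by
  refine msqrt_eq ?_ ?_
  · refine psd_sum _ _ fun x _ => ?_
    exact psd_csmul (psd_kron_std (msqrt_posSemidef (hρ x)) x) (Real.sqrt_nonneg _)
  · have h1 : (1 : Matrix (S × X) (S × X) ℂ) = (1 : Matrix S S ℂ) ⊗ₖ (1 : Matrix X X ℂ) :=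
      (Matrix.one_kronecker_one).symm
    calc Dg (fun x => (Real.sqrt (p x) : ℂ)) (fun x => msqrt (ρ x))
          * Dg (fun x => (Real.sqrt (p x) : ℂ)) (fun x => msqrt (ρ x))
        = Dg (fun x => (Real.sqrt (p x) : ℂ)) (fun x => msqrt (ρ x))
          * ((1 : Matrix S S ℂ) ⊗ₖ (1 : Matrix X X ℂ))
          * Dg (fun x => (Real.sqrt (p x) : ℂ)) (fun x => msqrt (ρ x)) := by
          rw [← h1, mul_one]
      _ = Dg (fun x => (p x : ℂ)) ρ := by
          rw [Dg_mul]
          unfold Dg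
          refine Finset.sum_congr rfl fun x _ => ?_
          dsimp only
          rw [mul_one, msqrt_mul_self (hρ x), ← Complex.ofReal_mul,
            Real.mul_self_sqrt (hp x)]

/-- The ensemble superoperator `Φ`. -/
noncomputable def Phi (p : X → ℝ) (ρ : X → Matrix S S ℂ) (A : Matrix S S ℂ) : Matrix S S ℂ :=
  ∑ x, (p x : ℂ) • (msqrt (ρ x) * A * msqrt (ρ x))

lemma retro_Dg {T : Type*} [Fintype T] [DecidableEq T]
    (E : Matrix S S ℂ →ₗ[ℂ] Matrix T T ℂ) (σ : Matrix T T ℂ)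
    (hρ : ∀ x, (ρ x).PosSemidef) (hp : ∀ x, 0 ≤ p x) :
    retroExt E (Dg (fun x => (p x : ℂ)) ρ) σ
      = Phi p ρ (adjMap E (invsqrt (E (ptraceR (Dg (fun x => (p x : ℂ)) ρ))) * σ *
          invsqrt (E (ptraceR (Dg (fun x => (p x : ℂ)) ρ))))) := by
  set A := adjMap E (invsqrt (E (ptraceR (Dg (fun x => (p x : ℂ)) ρ))) * σ *
      invsqrt (E (ptraceR (Dg (fun x => (p x : ℂ)) ρ)))) with hA
  rw [retroExt, petzExt, ← hA, msqrt_Dg hρ hp, Dg_mul, ptraceR_Dg]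
  refine Finset.sum_congr rfl fun x _ => ?_
  rw [← Complex.ofReal_mul, Real.mul_self_sqrt (hp x)]

lemma Phi_entry (A : Matrix S S ℂ) (i j : S) :
    Phi p ρ A i j = ∑ k, ∑ l, A k l *
      ((∑ x, (p x : ℂ) • (msqrt (ρ x) ⊗ₖ msqrt (ρ x))) (i, l) (k, j)) := by
  simp only [Phi, Matrix.sum_apply, Matrix.smul_apply, smul_eq_mul, Matrix.mul_apply,
    kroneckerMap_apply, Finset.mul_sum, Finset.sum_mul]
  rw [Finset.sum_comm]
  conv_rhs => rw [Finset.sum_comm]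
  refine Finset.sum_congr rfl fun l _ => ?_
  rw [Finset.sum_comm]
  refine Finset.sum_congr rfl fun k _ => ?_
  refine Finset.sum_congr rfl fun x _ => ?_
  ring

end Block2

section PhiLemmas
variable {S X Y : Type*} [Fintype S] [DecidableEq S] [Fintype X] [DecidableEq X]
  [Fintype Y] [DecidableEq Y]
variable {ρ : X → Matrix S S ℂ} {p : X → ℝ} {σ : Y → Matrix S S ℂ} {q : Y → ℝ}

lemma Phi_std (k l : S) (i j : S) :
    Phi p ρ (Matrix.single k l 1) i j
      = (∑ x, (p x : ℂ) • (msqrt (ρ x) ⊗ₖ msqrt (ρ x))) (i, l) (k, j) := by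
  rw [Phi_entry]
  simp [Matrix.single, Matrix.of_apply, ite_and, Finset.sum_ite_eq, ite_mul]

lemma K_eq_of_Phi (h : ∀ A, Phi p ρ A = Phi q σ A) :
    (∑ x, (p x : ℂ) • (msqrt (ρ x) ⊗ₖ msqrt (ρ x)))
      = ∑ y, (q y : ℂ) • (msqrt (σ y) ⊗ₖ msqrt (σ y)) := by
  ext ⟨i, l⟩ ⟨k, j⟩
  rw [← Phi_std, ← Phi_std, h]

lemma Phi_eq_of_K
    (h : (∑ x, (p x : ℂ) • (msqrt (ρ x) ⊗ₖ msqrt (ρ x)))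
      = ∑ y, (q y : ℂ) • (msqrt (σ y) ⊗ₖ msqrt (σ y))) (A : Matrix S S ℂ) :
    Phi p ρ A = Phi q σ A := by
  ext i j
  rw [Phi_entry, Phi_entry]
  simp_rw [h]

lemma Phi_one (hρ : ∀ x, (ρ x).PosSemidef) :
    Phi p ρ 1 = ∑ x, (p x : ℂ) • ρ x := by
  unfold Phi
  refine Finset.sum_congr rfl fun x _ => ?_
  rw [mul_one, msqrt_mul_self (hρ x)]

lemma Phi_add (A B : Matrix S S ℂ) : Phi p ρ (A + B) = Phi p ρ A + Phi p ρ B := by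
  unfold Phi
  rw [← Finset.sum_add_distrib]
  refine Finset.sum_congr rfl fun x _ => ?_
  rw [mul_add, add_mul, smul_add]

lemma Phi_smul (c : ℂ) (A : Matrix S S ℂ) : Phi p ρ (c • A) = c • Phi p ρ A := by
  unfold Phi
  rw [Finset.smul_sum]
  refine Finset.sum_congr rfl fun x _ => ?_
  rw [mul_smul_comm, smul_mul_assoc, smul_comm]

end PhiLemmas

section Chan1
variable {S : Type*} [Fintype S] [DecidableEq S]

/-- The totally depolarizing channel into a trivial (one-dimensional) system. -/
noncomputable def E1 (S : Type*) [Fintype S] [DecidableEq S] :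
    Matrix S S ℂ →ₗ[ℂ] Matrix (Fin 1) (Fin 1) ℂ :=
  (Matrix.traceLinearMap S ℂ ℂ).smulRight 1

lemma E1_apply (X : Matrix S S ℂ) : E1 S X = X.trace • 1 := rfl

lemma trace_std (i j : S) : (Matrix.single i j (1 : ℂ)).trace
    = if j = i then 1 else 0 := by
  simp [Matrix.trace, Matrix.diag, Matrix.single, ite_and, Finset.sum_ite_eq]

lemma E1_cptp : IsCPTP (E1 S) := by
  constructor
  · intro X
    simp [E1_apply, Matrix.trace_smul, Matrix.trace_one]
  · have : choi (E1 S) = 1 := by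
      ext ⟨p1, p2⟩ ⟨q1, q2⟩
      simp only [choi, Matrix.of_apply, E1_apply, Matrix.smul_apply, trace_std,
        Matrix.one_apply, Prod.mk.injEq, smul_eq_mul]
      have : p2 = q2 := Subsingleton.elim _ _
      subst this
      by_cases h : p1 = q1
      · simp [h, Matrix.one_apply]
      · simp [h, Ne.symm h, Matrix.one_apply]
    rw [this]
    exact Matrix.PosSemidef.one

lemma adjMap_E1_one : adjMap (E1 S) 1 = (1 : Matrix S S ℂ) := by
  ext i j
  by_cases h : i = j
  · subst h
    simp [adjMap, E1_apply, trace_std, Matrix.trace_smul, Matrix.one_apply]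
  · simp [adjMap, E1_apply, trace_std, h, Ne.symm h, Matrix.one_apply_ne h]

end Chan1

section Chan2
variable {S : Type*} [Fintype S] [DecidableEq S]

/-- Real coefficient `1/(2 dim S)`. -/
noncomputable def aR (S : Type*) [Fintype S] : ℝ := (2 * (Fintype.card S : ℝ))⁻¹

/-- The channel `X ↦ (tr X/(2d)) 1 + X/2` on `S`. -/
noncomputable def E2' (S : Type*) [Fintype S] [DecidableEq S] :
    Matrix S S ℂ →ₗ[ℂ] Matrix S S ℂ :=
  (aR S : ℂ) • (Matrix.traceLinearMap S ℂ ℂ).smulRight 1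
    + (((2 : ℝ)⁻¹ : ℝ) : ℂ) • LinearMap.id

/-- The same channel, transported to `Fin (card S)`. -/
noncomputable def E2 (S : Type*) [Fintype S] [DecidableEq S] :
    Matrix S S ℂ →ₗ[ℂ] Matrix (Fin (Fintype.card S)) (Fin (Fintype.card S)) ℂ :=
  (Matrix.reindexLinearEquiv ℂ ℂ (Fintype.equivFin S) (Fintype.equivFin S)).toLinearMap
    ∘ₗ E2' S

lemma E2'_apply (X : Matrix S S ℂ) :
    E2' S X = (aR S : ℂ) • (X.trace • 1) + (((2 : ℝ)⁻¹ : ℝ) : ℂ) • X := rfl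

lemma E2_apply (X : Matrix S S ℂ) :
    E2 S X = (E2' S X).submatrix (Fintype.equivFin S).symm (Fintype.equivFin S).symm := rfl

lemma trace_submatrix_equiv' {m n : Type*} [Fintype m] [Fintype n] (A : Matrix n n ℂ)
    (f : m ≃ n) : (A.submatrix f f).trace = A.trace := by
  exact Fintype.sum_equiv f _ _ fun i => rfl

lemma E2_trace_preserving [Nonempty S] (X : Matrix S S ℂ) : (E2 S X).trace = X.trace := by
  have hc : (Fintype.card S : ℂ) ≠ 0 := by
    exact_mod_cast Nat.cast_ne_zero.mpr Fintype.card_ne_zero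
  rw [E2_apply, trace_submatrix_equiv', E2'_apply, Matrix.trace_add, Matrix.trace_smul,
    Matrix.trace_smul, Matrix.trace_smul, Matrix.trace_one, aR]
  push_cast
  simp only [smul_eq_mul]
  field_simp
  ring

/-- The Choi matrix of the identity ingredient. -/
noncomputable def Cid (S : Type*) [Fintype S] [DecidableEq S] : Matrix (S × S) (S × S) ℂ :=
  Matrix.of fun p q => (if p.1 = p.2 then (1 : ℂ) else 0) * (if q.1 = q.2 then 1 else 0)

lemma Cid_psd : (Cid S).PosSemidef := by
  refine Matrix.PosSemidef.of_dotProduct_mulVec_nonneg ?_ ?_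
  · ext p q
    simp only [Cid, Matrix.conjTranspose_apply, Matrix.of_apply, star_mul',
      apply_ite (star : ℂ → ℂ), star_one, star_zero]
    ring
  · intro y
    set v : S × S → ℂ := fun p => if p.1 = p.2 then 1 else 0 with hv
    set z : ℂ := ∑ q, v q * y q with hz
    have key : star y ⬝ᵥ (Cid S *ᵥ y) = star z * z := by
      simp only [dotProduct, Matrix.mulVec, Cid, Matrix.of_apply, Pi.star_apply]
      have hrow : ∀ p, (∑ q, (v p * v q) * y q) = v p * z := by
        intro p
        rw [hz, Finset.mul_sum]
        exact Finset.sum_congr rfl fun q _ => by ring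
      calc ∑ p, star (y p) * (∑ q, (v p * v q) * y q)
          = ∑ p, star (y p) * (v p * z) := by
            exact Finset.sum_congr rfl fun p _ => by rw [hrow]
        _ = (∑ p, star (y p) * v p) * z := by
            rw [Finset.sum_mul]; exact Finset.sum_congr rfl fun p _ => by ring
        _ = star z * z := by
            have hzz : (∑ p, star (y p) * v p) = star z := by
              rw [hz, star_sum]
              refine Finset.sum_congr rfl fun p _ => ?_
              rw [star_mul']
              have hsv : star (v p) = v p := by
                simp [hv, apply_ite (star : ℂ → ℂ)]
              rw [hsv, mul_comm]
            rw [hzz]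
    rw [key]
    exact star_mul_self_nonneg z
end Chan2

section Chan2b
variable {S : Type*} [Fintype S] [DecidableEq S]

lemma choi_E2' : choi (E2' S) = (aR S : ℂ) • 1 + (((2:ℝ)⁻¹ : ℝ) : ℂ) • Cid S := by
  ext ⟨p1, p2⟩ ⟨q1, q2⟩
  simp only [choi, Matrix.of_apply, E2'_apply, Matrix.add_apply, Matrix.smul_apply,
    smul_eq_mul, trace_std, Cid, Matrix.one_apply, Prod.mk.injEq]
  by_cases h1 : p1 = q1 <;> by_cases h2 : p2 = q2 <;>
    · subst_eqs
      simp_all [Matrix.single, ite_and]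
      try split_ifs <;> simp_all
      try exact fun _ h' => h2 h'.symm

lemma choi_E2_psd : (choi (E2 S)).PosSemidef := by
  have hrw : choi (E2 S) = (choi (E2' S)).submatrix
      (fun pq : S × Fin (Fintype.card S) => (pq.1, (Fintype.equivFin S).symm pq.2))
      (fun pq : S × Fin (Fintype.card S) => (pq.1, (Fintype.equivFin S).symm pq.2)) := by
    ext ⟨p1, p2⟩ ⟨q1, q2⟩
    rfl
  rw [hrw, choi_E2']
  refine Matrix.PosSemidef.submatrix ?_ _
  exact (psd_csmul Matrix.PosSemidef.one (by rw [aR]; positivity : (0:ℝ) ≤ aR S)).add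
    (psd_csmul Cid_psd (by norm_num))

lemma E2_cptp [Nonempty S] : IsCPTP (E2 S) := ⟨E2_trace_preserving, choi_E2_psd⟩

lemma E2'_posDef {M : Matrix S S ℂ} [Nonempty S] (hM : M.PosSemidef) (htr : M.trace = 1) :
    (E2' S M).PosDef := by
  rw [E2'_apply, htr, one_smul]
  refine Matrix.PosDef.add_posSemidef ?_ (psd_csmul hM (by norm_num))
  rw [Matrix.smul_one_eq_diagonal]
  refine Matrix.posDef_diagonal_iff.mpr fun i => ?_
  have : (0:ℝ) < aR S := by
    rw [aR]
    have := Fintype.card_pos (α := S)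
    positivity
  exact_mod_cast Complex.zero_lt_real.mpr this

lemma posDef_submatrix_equiv {m n : Type*} [Fintype m] [Fintype n] [DecidableEq m]
    [DecidableEq n] {A : Matrix n n ℂ} (hA : A.PosDef) (f : m ≃ n) :
    (A.submatrix f f).PosDef := by
  exact hA.submatrix f.injective

lemma E2_posDef {M : Matrix S S ℂ} [Nonempty S] (hM : M.PosSemidef) (htr : M.trace = 1) :
    (E2 S M).PosDef := by
  rw [E2_apply]
  exact posDef_submatrix_equiv (E2'_posDef hM htr) _

end Chan2b

section Chan2c
variable {S : Type*} [Fintype S] [DecidableEq S]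

lemma trace_std_mul (k l : S) (Y : Matrix S S ℂ) :
    (Matrix.single k l (1 : ℂ) * Y).trace = Y l k := by
  simp [Matrix.trace, Matrix.diag, Matrix.mul_apply, Matrix.single, ite_and,
    Finset.sum_ite_eq]

lemma E2_std (i j : S) : E2 S (Matrix.single i j 1)
    = ((aR S : ℂ) * if j = i then 1 else 0) • (1 : Matrix (Fin (Fintype.card S)) _ ℂ)
      + (((2:ℝ)⁻¹ : ℝ) : ℂ) • Matrix.single
          (Fintype.equivFin S i) (Fintype.equivFin S j) 1 := by
  rw [E2_apply, E2'_apply, trace_std]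
  ext s t
  simp only [Matrix.submatrix_apply, Matrix.add_apply, Matrix.smul_apply, Matrix.one_apply,
    Matrix.single, Matrix.of_apply, smul_eq_mul, Equiv.eq_symm_apply,
    EmbeddingLike.apply_eq_iff_eq]
  rw [Equiv.apply_symm_apply]
  ring

lemma adjMap_E2 (Y : Matrix (Fin (Fintype.card S)) (Fin (Fintype.card S)) ℂ) :
    adjMap (E2 S) Y = (aR S : ℂ) • (Y.trace • (1 : Matrix S S ℂ))
      + (((2:ℝ)⁻¹ : ℝ) : ℂ) • (Y.submatrix (Fintype.equivFin S) (Fintype.equivFin S)) := by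
  ext i j
  simp only [adjMap, Matrix.of_apply, E2_std, Matrix.conjTranspose_add,
    Matrix.conjTranspose_smul, Matrix.conjTranspose_one, Matrix.add_mul, Matrix.trace_add,
    Matrix.smul_mul, Matrix.trace_smul, Matrix.add_apply, Matrix.smul_apply, Matrix.one_mul]
  rw [stdBasisMatrix_conjT, trace_std_mul]
  simp only [smul_eq_mul, Matrix.smul_apply, Matrix.one_apply, Matrix.submatrix_apply,
    star_mul', Complex.star_def, Complex.conj_ofReal, apply_ite (starRingEnd ℂ), _root_.map_one,
    _root_.map_zero]
  by_cases h : i = j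
  · subst h; ring
  · simp [h, Ne.symm h]

lemma msqrt_submatrix_equiv {m n : Type*} [Fintype m] [Fintype n] [DecidableEq m]
    [DecidableEq n] {A : Matrix n n ℂ} (hA : A.PosSemidef) (f : m ≃ n) :
    msqrt (A.submatrix f f) = (msqrt A).submatrix f f := by
  refine msqrt_eq ((msqrt_posSemidef hA).submatrix f) ?_
  rw [Matrix.submatrix_mul_equiv, msqrt_mul_self hA]

lemma invsqrt_submatrix_equiv {m n : Type*} [Fintype m] [Fintype n] [DecidableEq m]
    [DecidableEq n] {A : Matrix n n ℂ} (hA : A.PosSemidef) (f : m ≃ n) :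
    invsqrt (A.submatrix f f) = (invsqrt A).submatrix f f := by
  rw [invsqrt, invsqrt, msqrt_submatrix_equiv hA, Matrix.inv_submatrix_equiv]

end Chan2c

lemma invsqrt_one {n : Type*} [Fintype n] [DecidableEq n] :
    invsqrt (1 : Matrix n n ℂ) = 1 := by
  rw [invsqrt, msqrt_one, inv_one]


/-- Two mixed-state ensembles are equivalent beliefs iff
`Σ_x p(x) √ρ_x ⊗ √ρ_x = Σ_y q(y) √σ_y ⊗ √σ_y`. -/
theorem mixed_ensembles_equiv_iff
    {S X Y : Type*} [Fintype S] [DecidableEq S]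
    [Fintype X] [DecidableEq X] [Fintype Y] [DecidableEq Y]
    (ρ : X → Matrix S S ℂ) (σ : Y → Matrix S S ℂ) (p : X → ℝ) (q : Y → ℝ)
    (hρ : ∀ x, IsDensity (ρ x)) (hσ : ∀ y, IsDensity (σ y))
    (hp : ∀ x, 0 ≤ p x) (hq : ∀ y, 0 ≤ q y)
    (hp1 : ∑ x, p x = 1) (hq1 : ∑ y, q y = 1) :
    EquivBeliefs
      (∑ x, (p x : ℂ) • (ρ x ⊗ₖ Matrix.single x x (1 : ℂ)))
      (∑ y, (q y : ℂ) • (σ y ⊗ₖ Matrix.single y y (1 : ℂ))) ↔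
    (∑ x, (p x : ℂ) • (msqrt (ρ x) ⊗ₖ msqrt (ρ x))) =
      ∑ y, (q y : ℂ) • (msqrt (σ y) ⊗ₖ msqrt (σ y)) := by
  have hρp : ∀ x, (ρ x).PosSemidef := fun x => (hρ x).1
  have hσp : ∀ y, (σ y).PosSemidef := fun y => (hσ y).1
  have hDgβ : (∑ x, (p x : ℂ) • (ρ x ⊗ₖ Matrix.single x x (1 : ℂ)))
      = Dg (fun x => (p x : ℂ)) ρ := rfl
  have hDgγ : (∑ y, (q y : ℂ) • (σ y ⊗ₖ Matrix.single y y (1 : ℂ)))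
      = Dg (fun y => (q y : ℂ)) σ := rfl
  have htrβ : (∑ x, (p x : ℂ) • ρ x).trace = 1 := by
    rw [Matrix.trace_sum]
    rw [Finset.sum_congr rfl (fun x _ => by
      rw [Matrix.trace_smul, (hρ x).2, smul_eq_mul, mul_one])]
    rw [← Complex.ofReal_sum, hp1, Complex.ofReal_one]
  have htrγ : (∑ y, (q y : ℂ) • σ y).trace = 1 := by
    rw [Matrix.trace_sum]
    rw [Finset.sum_congr rfl (fun y _ => by
      rw [Matrix.trace_smul, (hσ y).2, smul_eq_mul, mul_one])]
    rw [← Complex.ofReal_sum, hq1, Complex.ofReal_one]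
  have hβpsd : (∑ x, (p x : ℂ) • ρ x).PosSemidef :=
    psd_sum _ _ fun x _ => psd_csmul (hρp x) (hp x)
  have hγpsd : (∑ y, (q y : ℂ) • σ y).PosSemidef :=
    psd_sum _ _ fun y _ => psd_csmul (hσp y) (hq y)
  have hptβ : ptraceR (Dg (fun x => (p x : ℂ)) ρ) = ∑ x, (p x : ℂ) • ρ x := ptraceR_Dg _ _
  have hptγ : ptraceR (Dg (fun y => (q y : ℂ)) σ) = ∑ y, (q y : ℂ) • σ y := ptraceR_Dg _ _
  rw [hDgβ, hDgγ]
  constructor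
  · intro h
    by_cases hS : Nonempty S
    swap
    · haveI : IsEmpty S := not_nonempty_iff.mp hS
      ext pq rs
      exact (IsEmpty.false pq.1).elim
    haveI := hS
    -- Step 1: equal marginals
    have hE1β : E1 S (ptraceR (Dg (fun x => (p x : ℂ)) ρ)) = 1 := by
      rw [hptβ, E1_apply, htrβ, one_smul]
    have hE1γ : E1 S (ptraceR (Dg (fun y => (q y : ℂ)) σ)) = 1 := by
      rw [hptγ, E1_apply, htrγ, one_smul]
    have h1 := h (Fin 1) inferInstance inferInstance (E1 S) E1_cptp
      (by rw [hE1β]; exact Matrix.PosDef.one) (by rw [hE1γ]; exact Matrix.PosDef.one) 1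
    rw [retro_Dg (E1 S) 1 hρp hp, retro_Dg (E1 S) 1 hσp hq, hE1β, hE1γ, invsqrt_one,
      Matrix.mul_one, Matrix.mul_one, adjMap_E1_one, Phi_one hρp, Phi_one hσp] at h1
    -- h1 : βS = γS
    -- Step 2
    apply K_eq_of_Phi
    intro A
    set e : S ≃ Fin (Fintype.card S) := Fintype.equivFin S with he
    set W : Matrix S S ℂ := E2' S (∑ x, (p x : ℂ) • ρ x) with hW
    have hWpd : W.PosDef := E2'_posDef hβpsd htrβ
    have hWpsd : W.PosSemidef := hWpd.posSemidef
    have hdet : IsUnit (msqrt W).det := by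
      have h2 : (msqrt W).det * (msqrt W).det = W.det := by
        rw [← Matrix.det_mul, msqrt_mul_self hWpsd]
      have hne : W.det ≠ 0 := hWpd.det_pos.ne'
      refine isUnit_iff_ne_zero.mpr fun h0 => hne ?_
      rw [← h2, h0, mul_zero]
    have hNW : invsqrt W * msqrt W = 1 := Matrix.nonsing_inv_mul _ hdet
    have hWN : msqrt W * invsqrt W = 1 := Matrix.mul_nonsing_inv _ hdet
    set σ' : Matrix (Fin (Fintype.card S)) (Fin (Fintype.card S)) ℂ :=
      (msqrt W * A * msqrt W).submatrix e.symm e.symm with hσ'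
    have h2 := h (Fin (Fintype.card S)) inferInstance inferInstance (E2 S) E2_cptp
      (by rw [hptβ]; exact E2_posDef hβpsd htrβ)
      (by rw [hptγ]; exact E2_posDef hγpsd htrγ) σ'
    rw [retro_Dg (E2 S) σ' hρp hp, retro_Dg (E2 S) σ' hσp hq, hptβ, hptγ, ← h1] at h2
    have hE2βS : E2 S (∑ x, (p x : ℂ) • ρ x) = W.submatrix e.symm e.symm := rfl
    have hinv : invsqrt (E2 S (∑ x, (p x : ℂ) • ρ x))
        = (invsqrt W).submatrix e.symm e.symm := by
      rw [hE2βS, invsqrt_submatrix_equiv hWpsd]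
    have harg : invsqrt (E2 S (∑ x, (p x : ℂ) • ρ x)) * σ' *
        invsqrt (E2 S (∑ x, (p x : ℂ) • ρ x)) = A.submatrix e.symm e.symm := by
      rw [hinv, hσ', Matrix.submatrix_mul_equiv, Matrix.submatrix_mul_equiv]
      have hin : invsqrt W * (msqrt W * A * msqrt W) * invsqrt W = A :=
        calc invsqrt W * (msqrt W * A * msqrt W) * invsqrt W
            = (invsqrt W * msqrt W) * A * (msqrt W * invsqrt W) := by
              simp only [Matrix.mul_assoc]
          _ = A := by rw [hNW, hWN, one_mul, mul_one]
      rw [hin]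
    have hsub : ((A.submatrix ⇑e.symm ⇑e.symm).submatrix ⇑e ⇑e) = A := by
      rw [Matrix.submatrix_submatrix]
      have h1' : (⇑e.symm ∘ ⇑e) = id := by
        funext s; simp
      rw [h1', Matrix.submatrix_id_id]
    rw [harg, adjMap_E2, trace_submatrix_equiv', ← he, hsub] at h2
    simp only [Phi_add, Phi_smul, Phi_one hρp, Phi_one hσp] at h2
    rw [← h1] at h2
    have h3 := add_left_cancel h2
    have hc : (((2:ℝ)⁻¹ : ℝ) : ℂ) ≠ 0 := by norm_num
    exact smul_right_injective (Matrix S S ℂ) hc h3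
  · intro hK T iT dT E _ _ _ σT
    letI := iT; letI := dT
    have hmarg : ptraceR (Dg (fun x => (p x : ℂ)) ρ) = ptraceR (Dg (fun y => (q y : ℂ)) σ) := by
      rw [hptβ, hptγ, ← Phi_one hρp, ← Phi_one hσp]
      exact Phi_eq_of_K hK 1
    refine (retro_Dg E σT hρp hp).trans (Eq.trans ?_ (retro_Dg E σT hσp hq).symm)
    rw [hmarg]
    exact Phi_eq_of_K hK _
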